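/- Let 0 < p < ∞ and let u, w be weights on ℝ and (0,∞) respectively. Suppose there is a constant C such that for every measurable set F of finite Lebesgue measure, Hχ_F is defined almost everywhere and ‖Hχ_F‖_{Λ^{p,∞}_u(w)} ≤ C ‖χ_F‖_{Λ^p_u(w)}. Then there is a constant C′ such that for every bounded interval I and every measurable set E ⊆ I with |E| > 0, W(u(I)) ≤ C′ (|I|/|E|)^p · W(u(E)). -/

import Mathlib

open MeasureTheory Filter Topology
open scoped ENNReal NNReal

noncomputable section

/-- The `u`-measure of a set `E`, `u(E) = ∫_E u`, as an extended nonnegative real. -/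
def wMeas (u : ℝ → ℝ) (E : Set ℝ) : ℝ≥0∞ := ∫⁻ x in E, ENNReal.ofReal (u x)

/-- The `u`-measure of a set `E`, `u(E) = ∫_E u(x) dx`, as a real number. -/
def wInt (u : ℝ → ℝ) (E : Set ℝ) : ℝ := ∫ x in E, u x

/-- `W(r) = ∫_0^r w(s) ds`. -/
def Wf (w : ℝ → ℝ) (r : ℝ) : ℝ := ∫ t in Set.Ioo (0:ℝ) r, w t

/-- A weight on `ℝ`: a positive locally integrable function. -/
def IsWeight (u : ℝ → ℝ) : Prop :=
  (∀ x, 0 < u x) ∧ MeasureTheory.LocallyIntegrable u volume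

/-- A weight on `(0,∞)`: positive there and locally integrable on `(0,r)` for every `r > 0`. -/
def IsWeightOn (w : ℝ → ℝ) : Prop :=
  (∀ t, 0 < t → 0 < w t) ∧ ∀ r, 0 < r → MeasureTheory.IntegrableOn w (Set.Ioo (0:ℝ) r) volume

/-- Decreasing rearrangement (with respect to the weight `u`) of an `ℝ≥0∞`-valued function. -/
def rearrE (u : ℝ → ℝ) (g : ℝ → ℝ≥0∞) (t : ℝ) : ℝ≥0∞ :=
  sInf {s : ℝ≥0∞ | wMeas u {x | s < g x} ≤ ENNReal.ofReal t}

/-- Decreasing rearrangement `f*_u` of `f` with respect to the weight `u`. -/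
def rearr (u f : ℝ → ℝ) (t : ℝ) : ℝ≥0∞ :=
  rearrE u (fun x => ENNReal.ofReal |f x|) t

/-- The quasinorm of `Λ^p_u(w)` for `ℝ≥0∞`-valued functions. -/
def lorentzNormE (p : ℝ) (u w : ℝ → ℝ) (g : ℝ → ℝ≥0∞) : ℝ≥0∞ :=
  (∫⁻ t in Set.Ioi (0:ℝ), rearrE u g t ^ p * ENNReal.ofReal (w t)) ^ (1/p)

/-- The quasinorm of the weighted Lorentz space `Λ^p_u(w)`. -/
def lorentzNorm (p : ℝ) (u w f : ℝ → ℝ) : ℝ≥0∞ :=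
  lorentzNormE p u w (fun x => ENNReal.ofReal |f x|)

/-- The quasinorm of `Λ^{p,∞}_u(w)` for `ℝ≥0∞`-valued functions. -/
def weakLorentzNormE (p : ℝ) (u w : ℝ → ℝ) (g : ℝ → ℝ≥0∞) : ℝ≥0∞ :=
  ⨆ t ∈ Set.Ioi (0:ℝ), ENNReal.ofReal (Wf w t) ^ (1/p) * rearrE u g t

/-- The quasinorm of the weak weighted Lorentz space `Λ^{p,∞}_u(w)`. -/
def weakLorentzNorm (p : ℝ) (u w f : ℝ → ℝ) : ℝ≥0∞ :=
  weakLorentzNormE p u w (fun x => ENNReal.ofReal |f x|)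

/-- Membership in `Λ^p_u(w)`. -/
def MemLambda (p : ℝ) (u w f : ℝ → ℝ) : Prop :=
  Measurable f ∧ lorentzNorm p u w f < ∞

/-- The quasinorm of the Lorentz space `L^{p,q}(u)`, `0 < q ≤ ∞`. -/
def lpqNorm (p : ℝ) (q : ℝ≥0∞) (u f : ℝ → ℝ) : ℝ≥0∞ :=
  if q = ∞ then ⨆ t ∈ Set.Ioi (0:ℝ), ENNReal.ofReal t ^ (1/p) * rearr u f t
  else (∫⁻ t in Set.Ioi (0:ℝ),
      (ENNReal.ofReal t ^ (1/p) * rearr u f t) ^ q.toReal / ENNReal.ofReal t) ^ (1/q.toReal)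

/-- Membership in `L^{p,q}(u)`. -/
def MemLpq (p : ℝ) (q : ℝ≥0∞) (u f : ℝ → ℝ) : Prop :=
  Measurable f ∧ lpqNorm p q u f < ∞

/-- The associate norm `‖g‖_{(Λ^p_u(w))'}`. -/
def assocNorm (p : ℝ) (u w g : ℝ → ℝ) : ℝ≥0∞ :=
  ⨆ (f : ℝ → ℝ) (_ : MemLambda p u w f) (_ : lorentzNorm p u w f ≠ 0),
    ENNReal.ofReal |∫ x, f x * g x * u x| / lorentzNorm p u w f

/-- The truncated Hilbert integral `∫_{|x−y|>ε} f(y)/(x−y) dy`. -/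
def pvIntegral (f : ℝ → ℝ) (x ε : ℝ) : ℝ :=
  ∫ y in {y : ℝ | ε < |x - y|}, f y / (x - y)

/-- The principal value limit defining `Hf(x)` exists and equals `L`. -/
def HasHilbert (f : ℝ → ℝ) (x L : ℝ) : Prop :=
  Filter.Tendsto (fun ε : ℝ => (1 / Real.pi) * pvIntegral f x ε) (𝓝[>] 0) (𝓝 L)

/-- The Hilbert transform `Hf(x)` (junk value where the principal value does not exist). -/
def hilbert (f : ℝ → ℝ) (x : ℝ) : ℝ :=
  limUnder (𝓝[>] (0:ℝ)) (fun ε => (1 / Real.pi) * pvIntegral f x ε)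

/-- The Hilbert maximal operator `H*f(x)`. -/
def hilbertMax (f : ℝ → ℝ) (x : ℝ) : ℝ≥0∞ :=
  ⨆ ε ∈ Set.Ioi (0:ℝ), ENNReal.ofReal ((1 / Real.pi) * |pvIntegral f x ε|)

/-- The Hardy–Littlewood maximal operator over intervals of `ℝ`. -/
def maxOp (u : ℝ → ℝ) (x : ℝ) : ℝ≥0∞ :=
  ⨆ (a : ℝ) (b : ℝ) (_ : x ∈ Set.Ioo a b),
    (∫⁻ y in Set.Ioo a b, ENNReal.ofReal |u y|) / ENNReal.ofReal (b - a)

/-- The Muckenhoupt class `A_1`: `Mu ≤ C u` a.e. -/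
def A1 (u : ℝ → ℝ) : Prop :=
  ∃ C : ℝ, 0 < C ∧ ∀ᵐ x : ℝ ∂volume, maxOp u x ≤ ENNReal.ofReal (C * u x)

/-- The Muckenhoupt class `A_p`, `p > 1`. -/
def Ap (p : ℝ) (u : ℝ → ℝ) : Prop :=
  ∃ C : ℝ, 0 < C ∧ ∀ a b : ℝ, a < b →
    ((∫⁻ x in Set.Ioo a b, ENNReal.ofReal (u x)) / ENNReal.ofReal (b - a)) *
      ((∫⁻ x in Set.Ioo a b, ENNReal.ofReal (u x ^ (-1 / (p - 1)))) /
        ENNReal.ofReal (b - a)) ^ (p - 1)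
      ≤ ENNReal.ofReal C

/-- The class `B_p`: `∫_r^∞ (r/t)^p w(t) dt ≤ C W(r)`. -/
def Bp (p : ℝ) (w : ℝ → ℝ) : Prop :=
  ∃ C : ℝ, 0 < C ∧ ∀ r : ℝ, 0 < r →
    (∫⁻ t in Set.Ioi r, ENNReal.ofReal ((r / t) ^ p * w t)) ≤ ENNReal.ofReal (C * Wf w r)

/-- The class `B_{p,∞}`: the Hardy operator maps `L^p_dec(w)` to `L^{p,∞}(w)`. -/
def BpInfty (p : ℝ) (w : ℝ → ℝ) : Prop :=
  ∃ C : ℝ, 0 < C ∧ ∀ f : ℝ → ℝ, (∀ t, 0 < t → 0 ≤ f t) → AntitoneOn f (Set.Ioi 0) →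
    ∀ t : ℝ, 0 < t →
      ENNReal.ofReal (Wf w t) ^ (1/p) *
          ((∫⁻ s in Set.Ioo (0:ℝ) t, ENNReal.ofReal (f s)) / ENNReal.ofReal t)
        ≤ ENNReal.ofReal C *
            (∫⁻ s in Set.Ioi (0:ℝ), ENNReal.ofReal (f s) ^ p * ENNReal.ofReal (w s)) ^ (1/p)

/-- The class `B*_∞`: `∫_0^r W(t)/t dt ≤ C W(r)`. -/
def BstarInfty (w : ℝ → ℝ) : Prop :=
  ∃ C : ℝ, 0 < C ∧ ∀ r : ℝ, 0 < r →
    (∫⁻ t in Set.Ioo (0:ℝ) r, ENNReal.ofReal (Wf w t / t)) ≤ ENNReal.ofReal (C * Wf w r)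

/-- The `Δ_2` condition: `W(2r) ≤ C W(r)`. -/
def Delta2 (w : ℝ → ℝ) : Prop :=
  ∃ C : ℝ, 0 < C ∧ ∀ r : ℝ, 0 < r → Wf w (2 * r) ≤ C * Wf w r

/-- A doubling weight on `ℝ`: `u(2I) ≤ C u(I)` for every bounded interval `I`. -/
def DoublingWeight (u : ℝ → ℝ) : Prop :=
  ∃ C : ℝ, 0 < C ∧ ∀ c r : ℝ, 0 < r →
    wInt u (Set.Ioo (c - 2*r) (c + 2*r)) ≤ C * wInt u (Set.Ioo (c - r) (c + r))

/-- `φ_I(t) = sup{|E| : E ⊆ I, u(E) = t}` for `I = (a,b)`. -/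
def phiI (u : ℝ → ℝ) (a b t : ℝ) : ℝ :=
  sSup {m : ℝ | ∃ E : Set ℝ, MeasurableSet E ∧ E ⊆ Set.Ioo a b ∧
    wInt u E = t ∧ (volume E).toReal = m}

/-- The index `p_w`:  `inf{p > 0 : t^p/W(t) ∈ L^{p'-1}((0,1), dt/t)}`, where for `p ≤ 1`
(`p' = ∞`) the condition means essential boundedness on `(0,1)`. -/
def pwIndex (w : ℝ → ℝ) : ℝ :=
  sInf {p : ℝ | 0 < p ∧
    ((p ≤ 1 ∧ ∃ C : ℝ, ∀ᵐ t ∂(volume.restrict (Set.Ioo (0:ℝ) 1)), t ^ p / Wf w t ≤ C) ∨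
     (1 < p ∧ (∫⁻ t in Set.Ioo (0:ℝ) 1,
        ENNReal.ofReal ((t ^ p / Wf w t) ^ (1 / (p - 1)) / t)) < ∞))}

section Aux

open Set MeasureTheory

lemma wMeas_eq_ofReal_wInt (u : ℝ → ℝ) (hpos : ∀ x, 0 < u x) {S : Set ℝ}
    (hi : IntegrableOn u S) : wMeas u S = ENNReal.ofReal (wInt u S) := by
  unfold wMeas wInt
  rw [MeasureTheory.ofReal_integral_eq_lintegral_ofReal hi
    (Filter.Eventually.of_forall fun x => (hpos x).le)]

lemma Wf_nonneg (w : ℝ → ℝ) (hw : IsWeightOn w) (r : ℝ) : 0 ≤ Wf w r := by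
  unfold Wf
  exact setIntegral_nonneg measurableSet_Ioo fun t ht => (hw.1 t ht.1).le

lemma hilbert_indicator_eq (E : Set ℝ) (hE : MeasurableSet E) (a b x : ℝ)
    (hEI : E ⊆ Set.Ioo a b) (hx : x < a ∨ b < x) :
    hilbert (E.indicator fun _ => (1:ℝ)) x = (1 / Real.pi) * ∫ y in E, (x - y)⁻¹ := by
  set δ : ℝ := if x < a then a - x else x - b with hδ
  have hδpos : 0 < δ := by
    rcases hx with hx | hx
    · simp only [hδ, if_pos hx]; linarith
    · rcases lt_or_ge x a with h' | h'
      · simp only [hδ, if_pos h']; linarith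
      · have : ¬ x < a := not_lt.2 h'
        simp only [hδ, if_neg this]; linarith
  have hEsub : ∀ ε ∈ Set.Ioo (0:ℝ) δ, E ⊆ {y : ℝ | ε < |x - y|} := by
    intro ε hε y hy
    have hy' := hEI hy
    have : δ ≤ |x - y| := by
      rcases hx with hx | hx
      · have : x - y < 0 := by linarith [hy'.1]
        rw [abs_of_neg this]
        simp only [hδ, if_pos hx]
        linarith [hy'.1]
      · have hxa : ¬ x < a := not_lt.2 (by linarith [hy'.1, hy'.2])
        have : 0 < x - y := by linarith [hy'.2]
        rw [abs_of_pos this]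
        simp only [hδ, if_neg hxa]
        linarith [hy'.2]
    exact lt_of_lt_of_le hε.2 this
  have key : ∀ ε ∈ Set.Ioo (0:ℝ) δ,
      pvIntegral (E.indicator fun _ => (1:ℝ)) x ε = ∫ y in E, (x - y)⁻¹ := by
    intro ε hε
    unfold pvIntegral
    have h1 : ∀ y : ℝ, (E.indicator (fun _ => (1:ℝ)) y) / (x - y)
        = E.indicator (fun y => (x - y)⁻¹) y := by
      intro y
      by_cases hy : y ∈ E <;> simp [hy, div_eq_mul_inv]
    simp only [h1]
    rw [setIntegral_indicator hE]
    congr 1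
    rw [Set.inter_eq_right.2 (hEsub ε hε)]
  have hten : Filter.Tendsto (fun ε : ℝ => (1 / Real.pi) * pvIntegral (E.indicator fun _ => (1:ℝ)) x ε)
      (nhdsWithin 0 (Set.Ioi 0)) (nhds ((1 / Real.pi) * ∫ y in E, (x - y)⁻¹)) := by
    apply Filter.Tendsto.congr' _ tendsto_const_nhds
    filter_upwards [Ioo_mem_nhdsGT_of_mem (Set.mem_Ico.2 ⟨le_refl (0:ℝ), hδpos⟩)] with ε hε
    rw [key ε hε]
  unfold hilbert
  exact hten.limUnder_eq

lemma inv_integrableOn (x a b : ℝ) (hx : x < a ∨ b < x) :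
    IntegrableOn (fun y : ℝ => (x - y)⁻¹) (Set.Icc a b) := by
  apply ContinuousOn.integrableOn_Icc
  apply ContinuousOn.inv₀
  · exact (continuous_const.sub continuous_id).continuousOn
  · intro y hy
    rcases hx with hx | hx
    · exact sub_ne_zero.2 (by linarith [hy.1])
    · exact sub_ne_zero.2 (by linarith [hy.2])

lemma hilbert_lb (E : Set ℝ) (hE : MeasurableSet E) (a b : ℝ) (hab : a < b)
    (hEI : E ⊆ Set.Ioo a b) (J : Set ℝ)
    (hJ : J = Set.Ioo (2*a - b) a ∨ J = Set.Ioo b (2*b - a)) (x : ℝ) (hxJ : x ∈ J) :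
    (volume E).toReal / (2 * Real.pi * (b - a)) ≤ |hilbert (E.indicator fun _ => (1:ℝ)) x| := by
  have hpi := Real.pi_pos
  set m := (volume E).toReal with hm
  have hm0 : 0 ≤ m := ENNReal.toReal_nonneg
  have hEIcc : E ⊆ Set.Icc a b := hEI.trans Set.Ioo_subset_Icc_self
  have hconst : ∀ (c : ℝ), ∫ _ in E, c = m * c := by
    intro c; rw [setIntegral_const]; simp [hm, smul_eq_mul]; exact Or.inl rfl
  rcases hJ with hJ | hJ
  · -- x < a
    have hxa : x < a := by rw [hJ] at hxJ; exact hxJ.2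
    have hx2 : 2*a - b < x := by rw [hJ] at hxJ; exact hxJ.1
    have hi : IntegrableOn (fun y : ℝ => (x - y)⁻¹) E :=
      (inv_integrableOn x a b (Or.inl hxa)).mono_set hEIcc
    rw [hilbert_indicator_eq E hE a b x hEI (Or.inl hxa)]
    have hub : ∀ y ∈ E, (x - y)⁻¹ ≤ -(2*(b-a))⁻¹ := by
      intro y hy
      have h1 : a < y := (hEI hy).1
      have h2 : y < b := (hEI hy).2
      have hyx : 0 < y - x := by linarith
      have hyx2 : y - x < 2*(b-a) := by linarith
      have : (2*(b-a))⁻¹ ≤ (y - x)⁻¹ :=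
        one_div (2*(b-a)) ▸ one_div (y-x) ▸ one_div_le_one_div_of_le hyx hyx2.le
      have hrw : (x - y)⁻¹ = -(y - x)⁻¹ := by
        rw [show x - y = -(y - x) by ring, inv_neg]
      rw [hrw]; linarith
    have hint : (∫ y in E, (x - y)⁻¹) ≤ m * (-(2*(b-a))⁻¹) := by
      rw [← hconst]
      exact setIntegral_mono_on hi (integrableOn_const
        (lt_of_le_of_lt (measure_mono hEIcc) (by simp)).ne) hE hub
    have hneg : (∫ y in E, (x - y)⁻¹) ≤ -(m * (2*(b-a))⁻¹) := by
      rw [show -(m * (2*(b-a))⁻¹) = m * (-(2*(b-a))⁻¹) by ring]; exact hint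
    rw [abs_mul, abs_of_pos (by positivity : (0:ℝ) < 1 / Real.pi)]
    have habs : m * (2*(b-a))⁻¹ ≤ |∫ y in E, (x - y)⁻¹| := by
      have h0 : 0 ≤ m * (2*(b-a))⁻¹ := mul_nonneg hm0 (inv_nonneg.2 (by linarith))
      calc m * (2*(b-a))⁻¹ ≤ -(∫ y in E, (x - y)⁻¹) := by linarith
        _ ≤ |∫ y in E, (x - y)⁻¹| := neg_le_abs _
    calc m / (2 * Real.pi * (b - a)) = (1 / Real.pi) * (m * (2*(b-a))⁻¹) := by
          field_simp
      _ ≤ (1 / Real.pi) * |∫ y in E, (x - y)⁻¹| := by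
          apply mul_le_mul_of_nonneg_left habs (by positivity)
  · -- b < x
    have hxb : b < x := by rw [hJ] at hxJ; exact hxJ.1
    have hx2 : x < 2*b - a := by rw [hJ] at hxJ; exact hxJ.2
    have hi : IntegrableOn (fun y : ℝ => (x - y)⁻¹) E :=
      (inv_integrableOn x a b (Or.inr hxb)).mono_set hEIcc
    rw [hilbert_indicator_eq E hE a b x hEI (Or.inr hxb)]
    have hlb : ∀ y ∈ E, (2*(b-a))⁻¹ ≤ (x - y)⁻¹ := by
      intro y hy
      have h1 : a < y := (hEI hy).1
      have h2 : y < b := (hEI hy).2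
      have hyx : 0 < x - y := by linarith
      have hyx2 : x - y < 2*(b-a) := by linarith
      exact one_div (2*(b-a)) ▸ one_div (x-y) ▸ one_div_le_one_div_of_le hyx hyx2.le
    have hint : m * (2*(b-a))⁻¹ ≤ ∫ y in E, (x - y)⁻¹ := by
      rw [← hconst]
      exact setIntegral_mono_on (integrableOn_const
        (lt_of_le_of_lt (measure_mono hEIcc) (by simp)).ne) hi hE hlb
    rw [abs_mul, abs_of_pos (by positivity : (0:ℝ) < 1 / Real.pi)]
    have habs : m * (2*(b-a))⁻¹ ≤ |∫ y in E, (x - y)⁻¹| :=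
      le_trans hint (le_abs_self _)
    calc m / (2 * Real.pi * (b - a)) = (1 / Real.pi) * (m * (2*(b-a))⁻¹) := by
          field_simp
      _ ≤ (1 / Real.pi) * |∫ y in E, (x - y)⁻¹| := by
          apply mul_le_mul_of_nonneg_left habs (by positivity)

end Aux

section Aux2

open Set MeasureTheory

lemma lorentzNorm_indicator (p : ℝ) (hp : 0 < p) (u w : ℝ → ℝ) (hu : IsWeight u)
    (hw : IsWeightOn w) (E : Set ℝ) (hE : MeasurableSet E) (hiE : IntegrableOn u E)
    (hTE : 0 < wInt u E) :
    lorentzNorm p u w (E.indicator fun _ => (1:ℝ))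
      = ENNReal.ofReal (Wf w (wInt u E)) ^ (1/p) := by
  set TE := wInt u E with hTEdef
  have hμE : wMeas u E = ENNReal.ofReal TE := wMeas_eq_ofReal_wInt u hu.1 hiE
  have hg : (fun x => ENNReal.ofReal |E.indicator (fun _ => (1:ℝ)) x|)
      = E.indicator fun _ => (1:ℝ≥0∞) := by
    funext x
    by_cases hx : x ∈ E <;> simp [Set.indicator_of_mem, Set.indicator_of_notMem, hx]
  have hset1 : ∀ s : ℝ≥0∞, s < 1 → {x : ℝ | s < E.indicator (fun _ => (1:ℝ≥0∞)) x} = E := by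
    intro s hs
    ext x
    by_cases hx : x ∈ E <;> simp [hx, hs]
  have hset2 : ∀ s : ℝ≥0∞, 1 ≤ s → {x : ℝ | s < E.indicator (fun _ => (1:ℝ≥0∞)) x} = ∅ := by
    intro s hs
    ext x
    by_cases hx : x ∈ E <;> simp [hx, not_lt.2 hs]
  have hr1 : ∀ t : ℝ, ENNReal.ofReal t < ENNReal.ofReal TE →
      rearrE u (E.indicator fun _ => (1:ℝ≥0∞)) t = 1 := by
    intro t ht
    unfold rearrE
    apply le_antisymm
    · apply sInf_le
      show wMeas u {x : ℝ | (1:ℝ≥0∞) < E.indicator (fun _ => (1:ℝ≥0∞)) x} ≤ ENNReal.ofReal t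
      rw [hset2 1 le_rfl]
      unfold wMeas
      simp
    · apply le_sInf
      intro s hs
      by_contra hns
      push_neg at hns
      have : wMeas u {x : ℝ | s < E.indicator (fun _ => (1:ℝ≥0∞)) x} ≤ ENNReal.ofReal t := hs
      rw [hset1 s hns, hμE] at this
      exact absurd (lt_of_lt_of_le ht this) (lt_irrefl _)
  have hr2 : ∀ t : ℝ, ENNReal.ofReal TE ≤ ENNReal.ofReal t →
      rearrE u (E.indicator fun _ => (1:ℝ≥0∞)) t = 0 := by
    intro t ht
    unfold rearrE
    apply le_antisymm _ (zero_le)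
    apply sInf_le
    show wMeas u {x : ℝ | (0:ℝ≥0∞) < E.indicator (fun _ => (1:ℝ≥0∞)) x} ≤ ENNReal.ofReal t
    rw [hset1 0 zero_lt_one, hμE]
    exact ht
  unfold lorentzNorm lorentzNormE
  rw [hg]
  congr 1
  have hsplit : Set.Ioi (0:ℝ) = Set.Ioo 0 TE ∪ Set.Ici TE := by
    ext t
    constructor
    · intro ht
      rcases lt_or_ge t TE with h' | h'
      · exact Or.inl ⟨ht, h'⟩
      · exact Or.inr h'
    · rintro (⟨h1, _⟩ | h1)
      · exact h1
      · exact lt_of_lt_of_le hTE h1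
  rw [hsplit, lintegral_union measurableSet_Ici
    (Set.disjoint_left.2 fun x hx hx' => absurd hx.2 (not_lt.2 hx'))]
  have h1 : ∫⁻ t in Set.Ioo (0:ℝ) TE,
      rearrE u (E.indicator fun _ => (1:ℝ≥0∞)) t ^ p * ENNReal.ofReal (w t)
      = ∫⁻ t in Set.Ioo (0:ℝ) TE, ENNReal.ofReal (w t) := by
    apply setLIntegral_congr_fun measurableSet_Ioo
    intro t ht
    beta_reduce
    rw [hr1 t (by
      rw [ENNReal.ofReal_lt_ofReal_iff hTE]
      exact ht.2), ENNReal.one_rpow, one_mul]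
  have h2 : ∫⁻ t in Set.Ici TE,
      rearrE u (E.indicator fun _ => (1:ℝ≥0∞)) t ^ p * ENNReal.ofReal (w t) = 0 := by
    rw [show (0:ℝ≥0∞) = ∫⁻ _ in Set.Ici TE, 0 from (lintegral_zero).symm]
    apply setLIntegral_congr_fun measurableSet_Ici
    intro t ht
    beta_reduce
    rw [hr2 t (ENNReal.ofReal_le_ofReal ht), ENNReal.zero_rpow_of_pos hp, zero_mul]
  rw [h1, h2, add_zero]
  unfold Wf
  rw [MeasureTheory.ofReal_integral_eq_lintegral_ofReal (hw.2 TE hTE)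
    ((ae_restrict_iff' measurableSet_Ioo).2
      (Filter.Eventually.of_forall fun t ht => (hw.1 t ht.1).le))]

lemma Wf_le_of_forall_lt (w : ℝ → ℝ) (hw : IsWeightOn w) (T K : ℝ) (hT : 0 < T)
    (hK : ∀ t ∈ Set.Ioo (0:ℝ) T, Wf w t ≤ K) : Wf w T ≤ K := by
  obtain ⟨v, hvm, hvmem, hvt⟩ := exists_seq_strictMono_tendsto' hT
  have hmono : Monotone fun n => Set.Ioo (0:ℝ) (v n) :=
    fun i j hij => Set.Ioo_subset_Ioo_right (hvm.monotone hij)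
  have hunion : (⋃ n, Set.Ioo (0:ℝ) (v n)) = Set.Ioo 0 T := by
    ext x
    simp only [Set.mem_iUnion, Set.mem_Ioo]
    constructor
    · rintro ⟨n, h1, h2⟩
      exact ⟨h1, h2.trans (hvmem n).2⟩
    · rintro ⟨h1, h2⟩
      obtain ⟨n, hn⟩ := (hvt.eventually (eventually_gt_nhds h2)).exists
      exact ⟨n, h1, hn⟩
  have hint : IntegrableOn w (⋃ n, Set.Ioo (0:ℝ) (v n)) := by
    rw [hunion]; exact hw.2 T hT
  have htend := tendsto_setIntegral_of_monotone (fun n => measurableSet_Ioo) hmono hint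
  rw [hunion] at htend
  have hWT : Wf w T = ∫ x in Set.Ioo (0:ℝ) T, w x := rfl
  rw [hWT]
  apply le_of_tendsto htend
  apply Filter.Eventually.of_forall
  intro n
  exact hK (v n) (hvmem n)

end Aux2

section Aux3

open Set MeasureTheory

lemma lemA (p C : ℝ) (hp : 0 < p) (hC : 0 < C) (u w : ℝ → ℝ)
    (hu : IsWeight u) (hw : IsWeightOn w)
    (h : ∀ F : Set ℝ, MeasurableSet F → volume F < ∞ →
      weakLorentzNorm p u w (hilbert (F.indicator fun _ => (1:ℝ)))
        ≤ ENNReal.ofReal C * lorentzNorm p u w (F.indicator fun _ => (1:ℝ)))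
    (a b : ℝ) (hab : a < b) (E : Set ℝ) (hE : MeasurableSet E)
    (hEI : E ⊆ Set.Ioo a b) (hm : 0 < (volume E).toReal)
    (J : Set ℝ) (hJ : J = Set.Ioo (2*a - b) a ∨ J = Set.Ioo b (2*b - a)) :
    Wf w (wInt u J) * ((volume E).toReal / (2 * Real.pi * (b - a))) ^ p
      ≤ C ^ p * Wf w (wInt u E) := by
  have hpi := Real.pi_pos
  have hba : 0 < b - a := by linarith
  set m := (volume E).toReal with hmdef
  set s₀ : ℝ := m / (2 * Real.pi * (b - a)) with hs₀def
  have hs₀ : 0 < s₀ := div_pos hm (by positivity)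
  -- integrability of u on relevant sets
  have hIcc : IntegrableOn u (Set.Icc (2*a - b) (2*b - a)) :=
    hu.2.integrableOn_isCompact isCompact_Icc
  have hsubI : Set.Ioo a b ⊆ Set.Icc (2*a - b) (2*b - a) := by
    intro x hx; exact ⟨by linarith [hx.1], by linarith [hx.2]⟩
  have hiE : IntegrableOn u E := hIcc.mono_set (hEI.trans hsubI)
  have hJsub : J ⊆ Set.Icc (2*a - b) (2*b - a) := by
    rcases hJ with hJ | hJ <;> rw [hJ] <;> intro x hx <;>
      exact ⟨by linarith [hx.1], by linarith [hx.2]⟩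
  have hiJ : IntegrableOn u J := hIcc.mono_set hJsub
  -- volume facts
  have hEfin : volume E < ∞ :=
    lt_of_le_of_lt (measure_mono hEI) (by simp)
  have hvolE : 0 < volume E := by
    rcases (ENNReal.toReal_pos_iff.mp hm) with ⟨h1, _⟩; exact h1
  have hsupp : Function.support u = Set.univ := by
    ext x; simp [Function.mem_support, (hu.1 x).ne']
  -- positivity of wInt
  have hTE : 0 < wInt u E := by
    unfold wInt
    rw [setIntegral_pos_iff_support_of_nonneg_ae
      (Filter.Eventually.of_forall fun x => (hu.1 x).le) hiE]
    rw [hsupp, Set.univ_inter]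
    exact hvolE
  have hvolJ : 0 < volume J := by
    rcases hJ with hJ | hJ <;> rw [hJ] <;> rw [Real.volume_Ioo] <;>
      exact ENNReal.ofReal_pos.2 (by linarith)
  have hTJ : 0 < wInt u J := by
    unfold wInt
    rw [setIntegral_pos_iff_support_of_nonneg_ae
      (Filter.Eventually.of_forall fun x => (hu.1 x).le) hiJ]
    rw [hsupp, Set.univ_inter]
    exact hvolJ
  have hμJ : wMeas u J = ENNReal.ofReal (wInt u J) := wMeas_eq_ofReal_wInt u hu.1 hiJ
  -- the key ENNReal inequality
  have hLor : lorentzNorm p u w (E.indicator fun _ => (1:ℝ))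
      = ENNReal.ofReal (Wf w (wInt u E)) ^ (1/p) :=
    lorentzNorm_indicator p hp u w hu hw E hE hiE hTE
  have key : ∀ t ∈ Set.Ioo (0:ℝ) (wInt u J),
      ENNReal.ofReal (Wf w t) ^ (1/p) * ENNReal.ofReal s₀
        ≤ ENNReal.ofReal C * ENNReal.ofReal (Wf w (wInt u E)) ^ (1/p) := by
    intro t ht
    have rlow : ENNReal.ofReal s₀
        ≤ rearrE u (fun x => ENNReal.ofReal |hilbert (E.indicator fun _ => (1:ℝ)) x|) t := by
      apply le_sInf
      intro s hs
      by_contra hns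
      push_neg at hns
      have hsub : J ⊆ {x : ℝ | s < ENNReal.ofReal |hilbert (E.indicator fun _ => (1:ℝ)) x|} := by
        intro x hx
        have := hilbert_lb E hE a b hab hEI J hJ x hx
        exact lt_of_lt_of_le hns (ENNReal.ofReal_le_ofReal this)
      have h1 : wMeas u J ≤ ENNReal.ofReal t := le_trans (lintegral_mono_set hsub) hs
      rw [hμJ] at h1
      have := (ENNReal.ofReal_le_ofReal_iff ht.1.le).mp h1
      linarith [ht.2]
    have hweak : ENNReal.ofReal (Wf w t) ^ (1/p) *
        rearrE u (fun x => ENNReal.ofReal |hilbert (E.indicator fun _ => (1:ℝ)) x|) t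
          ≤ weakLorentzNorm p u w (hilbert (E.indicator fun _ => (1:ℝ))) := by
      unfold weakLorentzNorm weakLorentzNormE
      exact le_iSup₂ (f := fun (t : ℝ) (_ : t ∈ Set.Ioi (0:ℝ)) =>
        ENNReal.ofReal (Wf w t) ^ (1/p) *
          rearrE u (fun x => ENNReal.ofReal |hilbert (E.indicator fun _ => (1:ℝ)) x|) t)
        t ht.1
    calc ENNReal.ofReal (Wf w t) ^ (1/p) * ENNReal.ofReal s₀
        ≤ ENNReal.ofReal (Wf w t) ^ (1/p) *
          rearrE u (fun x => ENNReal.ofReal |hilbert (E.indicator fun _ => (1:ℝ)) x|) t :=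
          mul_le_mul_right rlow _
      _ ≤ weakLorentzNorm p u w (hilbert (E.indicator fun _ => (1:ℝ))) := hweak
      _ ≤ ENNReal.ofReal C * lorentzNorm p u w (E.indicator fun _ => (1:ℝ)) := h E hE hEfin
      _ = ENNReal.ofReal C * ENNReal.ofReal (Wf w (wInt u E)) ^ (1/p) := by rw [hLor]
  -- convert to a real inequality for each t
  have hWEnn : 0 ≤ Wf w (wInt u E) := Wf_nonneg w hw _
  have keyR : ∀ t ∈ Set.Ioo (0:ℝ) (wInt u J),
      Wf w t * s₀ ^ p ≤ C ^ p * Wf w (wInt u E) := by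
    intro t ht
    have h1 := ENNReal.rpow_le_rpow (key t ht) hp.le
    rw [ENNReal.mul_rpow_of_nonneg _ _ hp.le, ENNReal.mul_rpow_of_nonneg _ _ hp.le,
      ← ENNReal.rpow_mul, ← ENNReal.rpow_mul, one_div_mul_cancel hp.ne',
      ENNReal.rpow_one, ENNReal.rpow_one,
      ENNReal.ofReal_rpow_of_pos hs₀, ENNReal.ofReal_rpow_of_pos hC,
      ← ENNReal.ofReal_mul (Wf_nonneg w hw t), ← ENNReal.ofReal_mul (by positivity)] at h1
    exact (ENNReal.ofReal_le_ofReal_iff (by positivity)).mp h1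
  -- pass to the limit t → wInt u J
  have hs₀p : 0 < s₀ ^ p := Real.rpow_pos_of_pos hs₀ p
  have hfin : Wf w (wInt u J) ≤ C ^ p * Wf w (wInt u E) / s₀ ^ p := by
    apply Wf_le_of_forall_lt w hw _ _ hTJ
    intro t ht
    rw [le_div_iff₀ hs₀p]
    exact keyR t ht
  calc Wf w (wInt u J) * s₀ ^ p ≤ (C ^ p * Wf w (wInt u E) / s₀ ^ p) * s₀ ^ p :=
        mul_le_mul_of_nonneg_right hfin hs₀p.le
    _ = C ^ p * Wf w (wInt u E) := by field_simp

end Aux3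

/-- the weak-type inequality on characteristic functions implies the
quasi-concavity type condition on `W ∘ u`. -/
theorem quasiconcavity_of_weak_type (p : ℝ) (hp : 0 < p) (u w : ℝ → ℝ)
    (hu : IsWeight u) (hw : IsWeightOn w)
    (h : ∃ C : ℝ, 0 < C ∧ ∀ F : Set ℝ, MeasurableSet F → volume F < ∞ →
      (∀ᵐ x : ℝ ∂volume, ∃ L, HasHilbert (F.indicator fun _ => (1:ℝ)) x L) ∧
      weakLorentzNorm p u w (hilbert (F.indicator fun _ => (1:ℝ)))
        ≤ ENNReal.ofReal C * lorentzNorm p u w (F.indicator fun _ => (1:ℝ))) :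
    ∃ C' : ℝ, 0 < C' ∧ ∀ a b : ℝ, a < b → ∀ E : Set ℝ, MeasurableSet E →
      E ⊆ Set.Ioo a b → 0 < (volume E).toReal →
      Wf w (wInt u (Set.Ioo a b))
        ≤ C' * ((b - a) / (volume E).toReal) ^ p * Wf w (wInt u E) := by
  obtain ⟨C, hC, hh⟩ := h
  have hh' : ∀ F : Set ℝ, MeasurableSet F → volume F < ∞ →
      weakLorentzNorm p u w (hilbert (F.indicator fun _ => (1:ℝ)))
        ≤ ENNReal.ofReal C * lorentzNorm p u w (F.indicator fun _ => (1:ℝ)) :=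
    fun F h1 h2 => (hh F h1 h2).2
  have hpi := Real.pi_pos
  refine ⟨(4 * Real.pi ^ 2 * C ^ 2) ^ p, Real.rpow_pos_of_pos (by positivity) p, ?_⟩
  intro a b hab E hE hEI hm
  have hba : 0 < b - a := by linarith
  set m := (volume E).toReal with hmdef
  have A1 := lemA p C hp hC u w hu hw hh' a b hab E hE hEI hm
    (Set.Ioo b (2*b - a)) (Or.inr rfl)
  have hab2 : b < 2*b - a := by linarith
  have hm2 : 0 < (volume (Set.Ioo b (2*b - a))).toReal := by
    rw [Real.volume_Ioo, ENNReal.toReal_ofReal (by linarith)]; linarith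
  have A2 := lemA p C hp hC u w hu hw hh' b (2*b - a) hab2 (Set.Ioo b (2*b - a))
    measurableSet_Ioo subset_rfl hm2 (Set.Ioo a b)
    (Or.inl (by rw [show 2*b - (2*b - a) = a by ring]))
  have e1 : (volume (Set.Ioo b (2*b - a))).toReal = b - a := by
    rw [Real.volume_Ioo, ENNReal.toReal_ofReal (by linarith)]; ring
  rw [e1, show 2*b - a - b = b - a by ring,
    show (b - a) / (2 * Real.pi * (b - a)) = 1 / (2*Real.pi) by
      field_simp] at A2
  set WI := Wf w (wInt u (Set.Ioo a b)) with hWI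
  set WJ := Wf w (wInt u (Set.Ioo b (2*b - a))) with hWJ
  set WE := Wf w (wInt u E) with hWE
  have hWEnn : 0 ≤ WE := Wf_nonneg w hw _
  have hs0p : (0:ℝ) < (m / (2*Real.pi*(b-a))) ^ p :=
    Real.rpow_pos_of_pos (div_pos hm (by positivity)) p
  have hs1p : (0:ℝ) < ((1:ℝ)/(2*Real.pi)) ^ p := Real.rpow_pos_of_pos (by positivity) p
  have h1 : WJ ≤ C ^ p * WE / (m / (2*Real.pi*(b-a))) ^ p := (le_div_iff₀ hs0p).2 A1
  have h2 : WI ≤ C ^ p * WJ / ((1:ℝ)/(2*Real.pi)) ^ p := (le_div_iff₀ hs1p).2 A2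
  have hCp : (0:ℝ) < C ^ p := Real.rpow_pos_of_pos hC p
  have sq : ∀ x : ℝ, 0 ≤ x → (x^2)^p = (x^p)^2 := by
    intro x hx
    rw [← Real.rpow_natCast x 2, ← Real.rpow_mul hx, mul_comm ((2:ℕ):ℝ) p,
      Real.rpow_mul hx, Real.rpow_natCast]
  have hMp : (0:ℝ) < m ^ p := Real.rpow_pos_of_pos hm p
  have hLp : (0:ℝ) < (b-a) ^ p := Real.rpow_pos_of_pos hba p
  have hAp : (0:ℝ) < (2*Real.pi) ^ p := Real.rpow_pos_of_pos (by positivity) p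
  calc WI ≤ C ^ p * WJ / ((1:ℝ)/(2*Real.pi)) ^ p := h2
    _ ≤ C ^ p * (C ^ p * WE / (m / (2*Real.pi*(b-a))) ^ p) / ((1:ℝ)/(2*Real.pi)) ^ p := by
        gcongr
    _ = (4 * Real.pi ^ 2 * C ^ 2) ^ p * ((b - a) / m) ^ p * WE := by
        rw [Real.div_rpow hm.le (by positivity : (0:ℝ) ≤ 2*Real.pi*(b-a)),
          Real.div_rpow zero_le_one (by positivity : (0:ℝ) ≤ 2*Real.pi),
          Real.div_rpow hba.le hm.le,
          Real.mul_rpow (by positivity : (0:ℝ) ≤ 2*Real.pi) hba.le,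
          show (4 * Real.pi ^ 2 * C ^ 2 : ℝ) = (2*Real.pi)^2 * C^2 by ring,
          Real.mul_rpow (by positivity : (0:ℝ) ≤ (2*Real.pi)^2) (by positivity : (0:ℝ) ≤ C^2),
          sq (2*Real.pi) (by positivity), sq C hC.le, Real.one_rpow]
        field_simp
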